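/- arXiv:2412.04895 — 2 statements merged into one kernel-verified Lean document; each statement's English description precedes it below -/
import Mathlib

section
/- Let M be the polynomial ring over ℂ in countably many variables x_0, x_1, x_2, … and y_0, y_1, y_2, …, with the ℤ-grading in which each x_n has weight +1 and each y_n has weight −1, and let ∂ be the unique ℂ-derivation of M satisfying ∂(x_n) = x_{n+1} and ∂(y_n) = y_{n+1} for all n. Then the weight-zero homogeneous component M_0 of M equals the smallest ∂-stable ℂ-subalgebra of M containing the elements x_n · y_0 for all n ∈ ℕ. -/
open MvPolynomial

/-- The weight function: each `x_n = X (Sum.inl n)` has weight `+1` and each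
`y_n = X (Sum.inr n)` has weight `-1`. -/
def wt : ℕ ⊕ ℕ → ℤ := Sum.elim (fun _ => 1) (fun _ => -1)

lemma wt_inl (n : ℕ) : wt (Sum.inl n) = 1 := rfl
lemma wt_inr (n : ℕ) : wt (Sum.inr n) = -1 := rfl

lemma weight_single_wt (a : ℕ ⊕ ℕ) :
    Finsupp.weight wt (Finsupp.single a 1) = wt a := by
  rw [Finsupp.weight_apply, Finsupp.sum_single_index] <;> simp

/-- A derivation sending each variable to a variable of the same weight preserves
weighted homogeneity. -/
lemma D_preserves (D : Derivation ℂ (MvPolynomial (ℕ ⊕ ℕ) ℂ) (MvPolynomial (ℕ ⊕ ℕ) ℂ))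
    (hDx : ∀ n : ℕ, D (X (Sum.inl n)) = X (Sum.inl (n + 1)))
    (hDy : ∀ n : ℕ, D (X (Sum.inr n)) = X (Sum.inr (n + 1)))
    {p : MvPolynomial (ℕ ⊕ ℕ) ℂ} {m : ℤ}
    (hp : p.IsWeightedHomogeneous wt m) : (D p).IsWeightedHomogeneous wt m := by
  have hD : D = mkDerivation ℂ (fun a => X (Sum.map Nat.succ Nat.succ a)) := by
    apply derivation_ext
    rintro (n | n) <;> simp [hDx, hDy, Nat.succ_eq_add_one]
  rw [hD, show p = ∑ v ∈ p.support, monomial v (coeff v p) from p.as_sum, map_sum]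
  apply IsWeightedHomogeneous.sum
  intro v hv
  rw [mkDerivation_monomial]
  have hwv : Finsupp.weight wt v = m := hp (mem_support_iff.mp hv)
  rw [← mem_weightedHomogeneousSubmodule]
  apply Submodule.smul_mem
  rw [Finsupp.sum]
  apply Submodule.sum_mem
  intro i hi
  rw [mem_weightedHomogeneousSubmodule, smul_eq_mul]
  have h1 : IsWeightedHomogeneous wt
      (monomial (v - Finsupp.single i 1) ((v i : ℂ)) * X (Sum.map Nat.succ Nat.succ i))
      (Finsupp.weight wt (v - Finsupp.single i 1) + wt (Sum.map Nat.succ Nat.succ i)) :=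
    (isWeightedHomogeneous_monomial wt _ _ rfl).mul (isWeightedHomogeneous_X ℂ wt _)
  have hle : Finsupp.single i 1 ≤ v :=
    Finsupp.single_le_iff.2 (Nat.one_le_iff_ne_zero.2 (Finsupp.mem_support_iff.mp hi))
  have hsplit : (v - Finsupp.single i 1) + Finsupp.single i 1 = v := tsub_add_cancel_of_le hle
  have hws : wt (Sum.map Nat.succ Nat.succ i) = wt i := by cases i <;> rfl
  have heq : Finsupp.weight wt (v - Finsupp.single i 1) + wt (Sum.map Nat.succ Nat.succ i) = m := by
    rw [hws, ← weight_single_wt i, ← map_add, hsplit, hwv]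
  exact heq ▸ h1

lemma pair_mem (D : Derivation ℂ (MvPolynomial (ℕ ⊕ ℕ) ℂ) (MvPolynomial (ℕ ⊕ ℕ) ℂ))
    (hDx : ∀ n : ℕ, D (X (Sum.inl n)) = X (Sum.inl (n + 1)))
    (hDy : ∀ n : ℕ, D (X (Sum.inr n)) = X (Sum.inr (n + 1)))
    (B : Subalgebra ℂ (MvPolynomial (ℕ ⊕ ℕ) ℂ))
    (hBD : ∀ a ∈ B, D a ∈ B)
    (hB0 : ∀ n : ℕ, X (Sum.inl n) * X (Sum.inr 0) ∈ B) :
    ∀ j i : ℕ, X (Sum.inl i) * X (Sum.inr j) ∈ B := by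
  intro j
  induction j with
  | zero => exact fun i => hB0 i
  | succ j ih =>
    intro i
    have hkey : X (Sum.inl i) * X (Sum.inr (j + 1)) =
        D (X (Sum.inl i) * X (Sum.inr j)) - X (Sum.inl (i + 1)) * X (Sum.inr j) := by
      rw [Derivation.leibniz, hDx, hDy, smul_eq_mul, smul_eq_mul]
      ring
    rw [hkey]
    exact sub_mem (hBD _ (ih i)) (ih (i + 1))

lemma monomial_mem (B : Subalgebra ℂ (MvPolynomial (ℕ ⊕ ℕ) ℂ))
    (hpair : ∀ j i : ℕ, X (Sum.inl i) * X (Sum.inr j) ∈ B) :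
    ∀ (N : ℕ) (d : (ℕ ⊕ ℕ) →₀ ℕ), (d.sum fun _ k => k) ≤ N →
      Finsupp.weight wt d = 0 → monomial d (1 : ℂ) ∈ B := by
  intro N
  induction N with
  | zero =>
    intro d hdeg _
    have hd0 : d = 0 := by
      ext a
      by_contra ha
      have haS : a ∈ d.support := Finsupp.mem_support_iff.2 ha
      have : 0 < d.sum fun _ k => k := by
        rw [Finsupp.sum]
        exact Finset.sum_pos' (fun _ _ => Nat.zero_le _)
          ⟨a, haS, Nat.pos_of_ne_zero ha⟩
      omega
    rw [hd0]
    simpa using B.one_mem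
  | succ N ih =>
    intro d hdeg hw
    by_cases hd0 : d = 0
    · rw [hd0]; simpa using B.one_mem
    · -- there must be a left variable and a right variable in d
      have hL : ∃ i : ℕ, d (Sum.inl i) ≠ 0 := by
        by_contra h
        push_neg at h
        obtain ⟨a, ha⟩ : ∃ a, d a ≠ 0 := by
          by_contra h2; push_neg at h2; exact hd0 (Finsupp.ext h2)
        obtain (i | j) := a
        · exact ha (h i)
        · have hlt : (∑ a ∈ d.support, (d a) • wt a) < 0 := by
            have : (∑ a ∈ d.support, (d a) • wt a) < ∑ _a ∈ d.support, (0 : ℤ) := by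
              apply Finset.sum_lt_sum
              · intro b _
                obtain (i | j') := b
                · simp [h i]
                · simp only [wt_inr, nsmul_eq_mul]; omega
              · refine ⟨Sum.inr j, Finsupp.mem_support_iff.2 ha, ?_⟩
                simp only [wt_inr, nsmul_eq_mul]
                have := Nat.pos_of_ne_zero ha
                omega
            simpa using this
          rw [Finsupp.weight_apply, Finsupp.sum] at hw
          exact hlt.ne hw
      have hR : ∃ j : ℕ, d (Sum.inr j) ≠ 0 := by
        by_contra h
        push_neg at h
        obtain ⟨a, ha⟩ : ∃ a, d a ≠ 0 := by
          by_contra h2; push_neg at h2; exact hd0 (Finsupp.ext h2)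
        obtain (i | j) := a
        · have hlt : (0 : ℤ) < ∑ a ∈ d.support, (d a) • wt a := by
            have : (∑ _a ∈ d.support, (0 : ℤ)) < ∑ a ∈ d.support, (d a) • wt a := by
              apply Finset.sum_lt_sum
              · intro b _
                obtain (i' | j') := b
                · simp only [wt_inl, nsmul_eq_mul]; omega
                · simp [h j']
              · refine ⟨Sum.inl i, Finsupp.mem_support_iff.2 ha, ?_⟩
                simp only [wt_inl, nsmul_eq_mul]
                have := Nat.pos_of_ne_zero ha
                omega
            simpa using this
          rw [Finsupp.weight_apply, Finsupp.sum] at hw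
          exact hlt.ne' hw
        · exact ha (h j)
      obtain ⟨i, hi⟩ := hL
      obtain ⟨j, hj⟩ := hR
      set e := d - Finsupp.single (Sum.inl i) 1 with he_def
      have h1 : Finsupp.single (Sum.inl i) 1 ≤ d :=
        Finsupp.single_le_iff.2 (Nat.one_le_iff_ne_zero.2 hi)
      have he : e + Finsupp.single (Sum.inl i) 1 = d := tsub_add_cancel_of_le h1
      have h2 : Finsupp.single (Sum.inr j) 1 ≤ e := by
        apply Finsupp.single_le_iff.2
        rw [he_def]
        rw [Finsupp.tsub_apply, Finsupp.single_apply]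
        simp only [reduceCtorEq, if_false, Nat.sub_zero]
        exact Nat.one_le_iff_ne_zero.2 hj
      set d' := e - Finsupp.single (Sum.inr j) 1 with hd'_def
      have hd' : d' + Finsupp.single (Sum.inr j) 1 = e := tsub_add_cancel_of_le h2
      have hsplit : d' + Finsupp.single (Sum.inr j) 1 + Finsupp.single (Sum.inl i) 1 = d := by
        rw [hd', he]
      -- weight of d' is 0
      have hw' : Finsupp.weight wt d' = 0 := by
        have := congrArg (Finsupp.weight wt) hsplit
        rw [map_add, map_add, weight_single_wt, weight_single_wt, wt_inl, wt_inr, hw] at this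
        omega
      -- degree of d' is smaller
      have hdeg' : (d'.sum fun _ k => k) ≤ N := by
        have hadd : ∀ f g : (ℕ ⊕ ℕ) →₀ ℕ, ((f + g).sum fun _ k => k) =
            (f.sum fun _ k => k) + (g.sum fun _ k => k) := fun f g =>
          Finsupp.sum_add_index' (fun _ => rfl) (fun _ _ _ => rfl)
        have hone : ∀ a : ℕ ⊕ ℕ, ((Finsupp.single a 1).sum fun _ k => k) = 1 := fun a => by
          rw [Finsupp.sum_single_index]; rfl
        have := congrArg (fun f : (ℕ ⊕ ℕ) →₀ ℕ => f.sum fun _ k => k) hsplit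
        simp only [hadd, hone] at this
        omega
      have hmon : monomial d (1 : ℂ) =
          monomial d' 1 * (X (Sum.inl i) * X (Sum.inr j)) := by
        rw [X, X, monomial_mul, monomial_mul, mul_one, mul_one, ← hsplit]
        congr 1
        abel_nf
      rw [hmon]
      exact B.mul_mem (ih d' hdeg' hw') (hpair j i)

/-- The weight-zero component as a subalgebra. -/
noncomputable def A0 : Subalgebra ℂ (MvPolynomial (ℕ ⊕ ℕ) ℂ) where
  carrier := weightedHomogeneousSubmodule ℂ wt 0
  mul_mem' := fun ha hb => by simpa using IsWeightedHomogeneous.mul ha hb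
  one_mem' := isWeightedHomogeneous_one ℂ wt
  add_mem' := fun ha hb => IsWeightedHomogeneous.add ha hb
  zero_mem' := isWeightedHomogeneous_zero ℂ wt 0
  algebraMap_mem' := fun r => isWeightedHomogeneous_C wt r

/-- Let `∂` be the (unique) ℂ-derivation of `M = ℂ[x₀, x₁, …, y₀, y₁, …]` with
`∂ x_n = x_{n+1}` and `∂ y_n = y_{n+1}`.  Then the weight-zero component `M₀`
equals the smallest `∂`-stable ℂ-subalgebra of `M` containing the elements
`x_n · y₀` for all `n`. -/
theorem weight_zero_component_eq_smallest_differential_subalgebra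
    (D : Derivation ℂ (MvPolynomial (ℕ ⊕ ℕ) ℂ) (MvPolynomial (ℕ ⊕ ℕ) ℂ))
    (hDx : ∀ n : ℕ, D (X (Sum.inl n)) = X (Sum.inl (n + 1)))
    (hDy : ∀ n : ℕ, D (X (Sum.inr n)) = X (Sum.inr (n + 1))) :
    (↑(weightedHomogeneousSubmodule ℂ wt 0) : Set (MvPolynomial (ℕ ⊕ ℕ) ℂ)) =
      (↑(sInf {A : Subalgebra ℂ (MvPolynomial (ℕ ⊕ ℕ) ℂ) |
          (∀ a ∈ A, D a ∈ A) ∧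
          ∀ n : ℕ, X (Sum.inl n) * X (Sum.inr 0) ∈ A}) :
        Set (MvPolynomial (ℕ ⊕ ℕ) ℂ)) := by
  apply Set.Subset.antisymm
  · intro p hp
    have hp' : p.IsWeightedHomogeneous wt 0 := hp
    rw [SetLike.mem_coe, Algebra.mem_sInf]
    rintro B ⟨hBD, hB0⟩
    have hpair := pair_mem D hDx hDy B hBD hB0
    rw [p.as_sum]
    apply sum_mem
    intro v hv
    have hwv : Finsupp.weight wt v = 0 := hp' (mem_support_iff.mp hv)
    have : monomial v (coeff v p) = (coeff v p) • monomial v (1 : ℂ) := by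
      rw [smul_monomial, smul_eq_mul, mul_one]
    rw [this]
    exact B.smul_mem (monomial_mem B hpair (v.sum fun _ k => k) v le_rfl hwv) _
  · intro x hx
    rw [SetLike.mem_coe, Algebra.mem_sInf] at hx
    have hA0 : A0 ∈ {A : Subalgebra ℂ (MvPolynomial (ℕ ⊕ ℕ) ℂ) |
        (∀ a ∈ A, D a ∈ A) ∧ ∀ n : ℕ, X (Sum.inl n) * X (Sum.inr 0) ∈ A} := by
      constructor
      · intro a ha
        exact D_preserves D hDx hDy ha
      · intro n
        have := (isWeightedHomogeneous_X ℂ wt (Sum.inl n)).mul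
          (isWeightedHomogeneous_X ℂ wt (Sum.inr 0))
        exact (by simpa [wt_inl, wt_inr] using this :
          IsWeightedHomogeneous wt (X (Sum.inl n) * X (Sum.inr 0) : MvPolynomial (ℕ ⊕ ℕ) ℂ) 0)
    exact hx A0 hA0
end

section
/- In ℂ[u_1, u_2, v_1], the ℂ-subalgebra generated by the polynomial u_1 + u_2 + v_1 together with all polynomials f_p = (u_1 + u_2 + 2v_1)^{p−1}(u_1 + v_1)(u_2 + v_1) for p ≥ 1 is contained in the ℂ-subalgebra generated by the power sums s_p = u_1^p + u_2^p − (−1)^p v_1^p for p ≥ 1. -/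
open MvPolynomial

/-- The power sums `s_p = u₁^p + u₂^p − (−1)^p v₁^p` in `ℂ[u₁, u₂, v₁]`,
with `u₁ = X 0`, `u₂ = X 1`, `v₁ = X 2`. -/
noncomputable def powerSum (p : ℕ) : MvPolynomial (Fin 3) ℂ :=
  X 0 ^ p + X 1 ^ p - (-1 : MvPolynomial (Fin 3) ℂ) ^ p * X 2 ^ p

/-- The polynomials `f_p = (u₁ + u₂ + 2v₁)^{p−1}(u₁ + v₁)(u₂ + v₁)`. -/
noncomputable def fGen (p : ℕ) : MvPolynomial (Fin 3) ℂ :=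
  (X 0 + X 1 + 2 * X 2) ^ (p - 1) * (X 0 + X 2) * (X 1 + X 2)

namespace AdjoinAux

/-- `c = -v₁`, so that `s_p = u₁^p + u₂^p - c^p`. -/
noncomputable def cc : MvPolynomial (Fin 3) ℂ := -X 2

/-- `f₁ = (u₁+v₁)(u₂+v₁)`. -/
noncomputable def f1 : MvPolynomial (Fin 3) ℂ := (X 0 + X 2) * (X 1 + X 2)

lemma powerSum_eq (p : ℕ) :
    powerSum p = X 0 ^ p + X 1 ^ p - cc ^ p := by
  rw [powerSum, cc]
  rw [neg_pow (X 2 : MvPolynomial (Fin 3) ℂ) p]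

/-- The target subalgebra, generated by the power sums. -/
noncomputable def A : Subalgebra ℂ (MvPolynomial (Fin 3) ℂ) :=
  Algebra.adjoin ℂ
    {g : MvPolynomial (Fin 3) ℂ | ∃ p : ℕ, 1 ≤ p ∧ g = powerSum p}

lemma powerSum_mem (p : ℕ) (hp : 1 ≤ p) : powerSum p ∈ A :=
  Algebra.subset_adjoin ⟨p, hp, rfl⟩

/-- The Newton-style recurrence identity. -/
lemma key (n : ℕ) :
    ((n : MvPolynomial (Fin 3) ℂ) + 2) * (cc ^ n * f1)
      + (∑ i ∈ Finset.range n, powerSum (i + 1) * cc ^ (n - 1 - i)) * f1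
    = powerSum 1 * powerSum (n + 1) - powerSum (n + 2) := by
  induction n with
  | zero =>
      simp only [Finset.range_zero, Finset.sum_empty, zero_mul, add_zero,
        Nat.cast_zero, zero_add]
      simp only [powerSum_eq, f1, cc]
      ring
  | succ n ih =>
      have hsum : (∑ i ∈ Finset.range (n + 1), powerSum (i + 1) * cc ^ (n + 1 - 1 - i))
          = cc * (∑ i ∈ Finset.range n, powerSum (i + 1) * cc ^ (n - 1 - i))
            + powerSum (n + 1) := by
        rw [Finset.sum_range_succ, Finset.mul_sum]
        congr 1
        · refine Finset.sum_congr rfl fun i hi => ?_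
          have hi' : i < n := Finset.mem_range.mp hi
          have h : n + 1 - 1 - i = (n - 1 - i) + 1 := by omega
          rw [h, pow_succ]; ring
        · simp
      rw [hsum]
      have J : cc ^ (n + 1) * f1 + powerSum (n + 1) * f1
          = powerSum 1 * powerSum (n + 2) - powerSum (n + 3)
            - cc * (powerSum 1 * powerSum (n + 1) - powerSum (n + 2)) := by
        simp only [powerSum_eq, f1, cc]
        ring
      push_cast
      linear_combination cc * ih + J

lemma cpow_f1_mem (n : ℕ) : cc ^ n * f1 ∈ A := by
  induction n using Nat.strong_induction_on with
  | _ n ih =>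
    have h2 : ((n : ℂ) + 2) ≠ 0 := by
      exact_mod_cast (by omega : ((n : ℕ) + 2 : ℕ) ≠ 0)
    have hmem : ((n : MvPolynomial (Fin 3) ℂ) + 2) * (cc ^ n * f1) ∈ A := by
      have heq : ((n : MvPolynomial (Fin 3) ℂ) + 2) * (cc ^ n * f1)
          = powerSum 1 * powerSum (n + 1) - powerSum (n + 2)
            - (∑ i ∈ Finset.range n, powerSum (i + 1) * cc ^ (n - 1 - i)) * f1 := by
        linear_combination key n
      rw [heq]
      refine A.sub_mem (A.sub_mem (A.mul_mem ?_ ?_) ?_) ?_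
      · exact powerSum_mem 1 le_rfl
      · exact powerSum_mem (n + 1) (by omega)
      · exact powerSum_mem (n + 2) (by omega)
      · rw [Finset.sum_mul]
        refine A.sum_mem fun i hi => ?_
        have hi' : i < n := Finset.mem_range.mp hi
        rw [mul_assoc]
        exact A.mul_mem (powerSum_mem (i + 1) (by omega)) (ih (n - 1 - i) (by omega))
    have hC : (C ((n : ℂ) + 2) : MvPolynomial (Fin 3) ℂ)
        = (n : MvPolynomial (Fin 3) ℂ) + 2 := by
      push_cast
      simp [map_add, map_natCast, map_ofNat]
    have hfinal : cc ^ n * f1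
        = C (((n : ℂ) + 2)⁻¹) * (((n : MvPolynomial (Fin 3) ℂ) + 2) * (cc ^ n * f1)) := by
      rw [← hC, ← mul_assoc, ← map_mul, inv_mul_cancel₀ h2, map_one, one_mul]
    rw [hfinal, ← smul_eq_C_mul]
    exact A.smul_mem hmem _

lemma fGen_mem (p : ℕ) (hp : 1 ≤ p) : fGen p ∈ A := by
  have hrepr : fGen p = (powerSum 1 + (-cc)) ^ (p - 1) * f1 := by
    simp only [fGen, f1, powerSum_eq, cc]
    ring
  rw [hrepr, add_pow, Finset.sum_mul]
  refine A.sum_mem fun i hi => ?_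
  have hterm : powerSum 1 ^ i * (-cc) ^ (p - 1 - i) * ((p - 1).choose i : MvPolynomial (Fin 3) ℂ) * f1
      = (-1) ^ (p - 1 - i) * ((p - 1).choose i : MvPolynomial (Fin 3) ℂ)
        * powerSum 1 ^ i * (cc ^ (p - 1 - i) * f1) := by
    rw [neg_pow]; ring
  rw [hterm]
  refine A.mul_mem (A.mul_mem (A.mul_mem ?_ ?_) ?_) (cpow_f1_mem _)
  · exact A.pow_mem (A.neg_mem A.one_mem) _
  · exact A.natCast_mem _
  · exact A.pow_mem (powerSum_mem 1 le_rfl) i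

end AdjoinAux

/-- The ℂ-subalgebra of `ℂ[u₁, u₂, v₁]` generated by `u₁ + u₂ + v₁` together
with the `f_p` (`p ≥ 1`) is contained in the ℂ-subalgebra generated by the
power sums `s_p` (`p ≥ 1`). -/
theorem adjoin_fGen_le_adjoin_powerSums :
    Algebra.adjoin ℂ
        (insert ((X 0 + X 1 + X 2 : MvPolynomial (Fin 3) ℂ))
          {g : MvPolynomial (Fin 3) ℂ | ∃ p : ℕ, 1 ≤ p ∧ g = fGen p}) ≤
      Algebra.adjoin ℂ
        {g : MvPolynomial (Fin 3) ℂ | ∃ p : ℕ, 1 ≤ p ∧ g = powerSum p} := by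
  rw [Algebra.adjoin_le_iff]
  rw [Set.insert_subset_iff]
  constructor
  · have h1 : (X 0 + X 1 + X 2 : MvPolynomial (Fin 3) ℂ) = powerSum 1 := by
      simp [powerSum]
    rw [h1]
    exact AdjoinAux.powerSum_mem 1 le_rfl
  · rintro g ⟨p, hp, rfl⟩
    exact AdjoinAux.fGen_mem p hp
end
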